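/- Let p be a positive integer and t a positive integer. The number of quadruples (j1,j2,j3,j4) of integers in [0,t) with j1+j2 = j3+j4 and j4 ≡ j2 (mod p) equals ∑_{n∈ℤ} max(0, t−|n|·p)². -/

import Mathlib

open Finset

private def pairSet (t : ℕ) (d : ℤ) : Finset (ℕ × ℕ) :=
  (Finset.range t ×ˢ Finset.range t).filter (fun ab => (ab.2 : ℤ) - (ab.1 : ℤ) = d)

private lemma pairSet_card (t : ℕ) (d : ℤ) : (pairSet t d).card = t - d.natAbs := by
  rw [← Finset.card_range (t - d.natAbs)]
  apply Finset.card_nbij' (fun ab => ab.1 - (-d).toNat)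
    (fun a => (a + (-d).toNat, a + d.toNat))
  · intro ab hab
    simp only [Finset.mem_coe, pairSet, Finset.mem_filter, Finset.mem_product, Finset.mem_range] at hab
    simp only [Finset.mem_coe, Finset.mem_range]
    omega
  · intro a ha
    simp only [Finset.mem_coe, Finset.mem_range] at ha
    simp only [Finset.mem_coe, pairSet, Finset.mem_filter, Finset.mem_product, Finset.mem_range]
    refine ⟨⟨?_, ?_⟩, ?_⟩ <;> omega
  · intro ab hab
    simp only [Finset.mem_coe, pairSet, Finset.mem_filter, Finset.mem_product, Finset.mem_range] at hab
    obtain ⟨⟨h1, h2⟩, h3⟩ := hab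
    have : ab.1 - (-d).toNat + (-d).toNat = ab.1 := by omega
    have h4 : ab.1 - (-d).toNat + d.toNat = ab.2 := by omega
    ext
    · simpa using this
    · simpa using h4
  · intro a ha
    simp only [Finset.mem_coe, Finset.mem_range] at ha
    simp only
    omega

private lemma nat_mod_eq_iff_int_dvd (p a b : ℕ) :
    a % p = b % p ↔ (p : ℤ) ∣ (a : ℤ) - (b : ℤ) := by
  constructor
  · intro h
    have hint : ((b : ℤ)) % p = (a : ℤ) % p := by
      rw [← Int.natCast_mod, ← Int.natCast_mod, h]
    exact Int.ModEq.dvd hint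
  · intro h
    have hint : ((b : ℤ)) ≡ (a : ℤ) [ZMOD p] := Int.modEq_iff_dvd.mpr h
    have : ((a : ℤ)) % p = (b : ℤ) % p := hint.symm
    exact_mod_cast this

theorem quadruple_count_congruent (p t : ℕ) (hp : 0 < p) (ht : 0 < t) :
    ((Finset.univ.filter (fun q : Fin t × Fin t × Fin t × Fin t =>
      (q.1 : ℕ) + (q.2.1 : ℕ) = (q.2.2.1 : ℕ) + (q.2.2.2 : ℕ) ∧
      (q.2.2.2 : ℕ) % p = (q.2.1 : ℕ) % p)).card : ℝ)
      = ∑' n : ℤ, (max 0 ((t : ℝ) - |(n : ℝ)| * p)) ^ 2 := by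
  classical
  set Q : Finset ((ℕ × ℕ) × ℕ × ℕ) :=
    ((Finset.range t ×ˢ Finset.range t) ×ˢ (Finset.range t ×ˢ Finset.range t)).filter
      (fun q => q.1.1 + q.1.2 = q.2.1 + q.2.2 ∧ q.2.2 % p = q.1.2 % p) with hQ
  -- Step 1: transfer to ℕ quadruples
  have step1 : (Finset.univ.filter (fun q : Fin t × Fin t × Fin t × Fin t =>
      (q.1 : ℕ) + (q.2.1 : ℕ) = (q.2.2.1 : ℕ) + (q.2.2.2 : ℕ) ∧
      (q.2.2.2 : ℕ) % p = (q.2.1 : ℕ) % p)).card = Q.card := by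
    apply Finset.card_nbij'
      (fun q => ((q.1.val, q.2.1.val), (q.2.2.1.val, q.2.2.2.val)))
      (fun r => (⟨r.1.1 % t, Nat.mod_lt _ ht⟩, ⟨r.1.2 % t, Nat.mod_lt _ ht⟩,
        ⟨r.2.1 % t, Nat.mod_lt _ ht⟩, ⟨r.2.2 % t, Nat.mod_lt _ ht⟩))
    · intro q hq
      simp only [Finset.mem_coe, Finset.mem_filter, Finset.mem_univ, true_and] at hq
      simp only [Finset.mem_coe, hQ, Finset.mem_filter, Finset.mem_product, Finset.mem_range]
      exact ⟨⟨⟨q.1.isLt, q.2.1.isLt⟩, q.2.2.1.isLt, q.2.2.2.isLt⟩, hq⟩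
    · intro r hr
      simp only [Finset.mem_coe, hQ, Finset.mem_filter, Finset.mem_product, Finset.mem_range] at hr
      obtain ⟨⟨⟨h1, h2⟩, h3, h4⟩, h5, h6⟩ := hr
      simp only [Finset.mem_coe, Finset.mem_filter, Finset.mem_univ, true_and]
      rw [Nat.mod_eq_of_lt h1, Nat.mod_eq_of_lt h2, Nat.mod_eq_of_lt h3, Nat.mod_eq_of_lt h4]
      exact ⟨h5, h6⟩
    · intro q _
      ext <;> simp [Nat.mod_eq_of_lt (Fin.is_lt _)]
    · intro r hr
      simp only [Finset.mem_coe, hQ, Finset.mem_filter, Finset.mem_product, Finset.mem_range] at hr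
      obtain ⟨⟨⟨h1, h2⟩, h3, h4⟩, _, _⟩ := hr
      simp [Nat.mod_eq_of_lt h1, Nat.mod_eq_of_lt h2, Nat.mod_eq_of_lt h3, Nat.mod_eq_of_lt h4]
  -- Step 2: fiberwise count
  have step2 : Q.card = ∑ n ∈ Finset.Icc (-(t : ℤ)) (t : ℤ),
      (t - n.natAbs * p) * (t - n.natAbs * p) := by
    rw [Finset.card_eq_sum_card_fiberwise
      (f := fun q : (ℕ × ℕ) × ℕ × ℕ => ((q.2.2 : ℤ) - (q.1.2 : ℤ)) / p)
      (t := Finset.Icc (-(t : ℤ)) (t : ℤ))]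
    · apply Finset.sum_congr rfl
      intro n _
      have hfiber : (Q.filter (fun q => ((q.2.2 : ℤ) - (q.1.2 : ℤ)) / p = n)).card
          = ((pairSet t (n * p)) ×ˢ (pairSet t (-(n * p)))).card := by
        apply Finset.card_nbij'
          (fun q => ((q.1.2, q.2.2), (q.1.1, q.2.1)))
          (fun r => ((r.2.1, r.1.1), (r.2.2, r.1.2)))
        · intro q hq
          simp only [Finset.mem_coe, hQ, Finset.mem_filter, Finset.mem_product, Finset.mem_range] at hq
          obtain ⟨⟨⟨⟨h1, h2⟩, h3, h4⟩, h5, h6⟩, h7⟩ := hq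
          have hd : (p : ℤ) ∣ (q.2.2 : ℤ) - (q.1.2 : ℤ) := (nat_mod_eq_iff_int_dvd p _ _).mp h6
          have hnp : (q.2.2 : ℤ) - (q.1.2 : ℤ) = n * p := by
            rw [← h7, Int.ediv_mul_cancel hd]
          simp only [Finset.mem_coe, pairSet, Finset.mem_product, Finset.mem_filter, Finset.mem_range]
          refine ⟨⟨⟨h2, h4⟩, hnp⟩, ⟨⟨h1, h3⟩, ?_⟩⟩
          have h5' : (q.1.1 : ℤ) + q.1.2 = q.2.1 + q.2.2 := by exact_mod_cast h5
          linarith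
        · intro r hr
          simp only [Finset.mem_coe, pairSet, Finset.mem_product, Finset.mem_filter, Finset.mem_range] at hr
          obtain ⟨⟨⟨h1, h2⟩, h3⟩, ⟨h4, h5⟩, h6⟩ := hr
          simp only [Finset.mem_coe, hQ, Finset.mem_filter, Finset.mem_product, Finset.mem_range]
          refine ⟨⟨⟨⟨h4, h1⟩, h5, h2⟩, ?_, ?_⟩, ?_⟩
          · have hsum : (r.2.1 : ℤ) + r.1.1 = r.2.2 + r.1.2 := by linarith
            exact_mod_cast hsum
          · rw [nat_mod_eq_iff_int_dvd]
            exact ⟨n, by linarith⟩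
          · have : (r.1.2 : ℤ) - (r.1.1 : ℤ) = n * p := h3
            rw [this, Int.mul_ediv_cancel _ (by exact_mod_cast hp.ne')]
        · intro q _; rfl
        · intro r _; rfl
      rw [hfiber, Finset.card_product, pairSet_card, pairSet_card]
      rw [Int.natAbs_neg, Int.natAbs_mul, Int.natAbs_natCast]
    · intro q hq
      simp only [Finset.mem_coe, hQ, Finset.mem_filter, Finset.mem_product, Finset.mem_range] at hq
      obtain ⟨⟨⟨h1, h2⟩, h3, h4⟩, h5, h6⟩ := hq
      have hd : (p : ℤ) ∣ (q.2.2 : ℤ) - (q.1.2 : ℤ) := (nat_mod_eq_iff_int_dvd p _ _).mp h6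
      obtain ⟨n, hn⟩ := hd
      simp only [Finset.mem_coe]
      rw [hn, Int.mul_ediv_cancel_left _ (by exact_mod_cast hp.ne')]
      have habs : n.natAbs ≤ p * n.natAbs := Nat.le_mul_of_pos_left _ hp
      have h7 : ((p : ℤ) * n).natAbs = p * n.natAbs := by
        rw [Int.natAbs_mul, Int.natAbs_natCast]
      have h8 : ((p : ℤ) * n).natAbs < t := by omega
      simp only [Finset.mem_coe, Finset.mem_Icc]
      omega
  -- Step 3: identify summands
  have key : ∀ n : ℤ, (max 0 ((t : ℝ) - |(n : ℝ)| * p)) ^ 2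
      = ((t - n.natAbs * p : ℕ) : ℝ) ^ 2 := by
    intro n
    have habs : |((n : ℤ) : ℝ)| = ((n.natAbs : ℕ) : ℝ) := by
      rw [Nat.cast_natAbs]
      push_cast
      rfl
    rcases le_or_gt (n.natAbs * p) t with h | h
    · have h' : ((n.natAbs : ℕ) : ℝ) * p ≤ (t : ℝ) := by exact_mod_cast h
      rw [Nat.cast_sub h, max_eq_right (by rw [habs]; linarith)]
      push_cast [habs]; ring_nf
    · have h' : (t : ℝ) ≤ ((n.natAbs : ℕ) : ℝ) * p := by exact_mod_cast h.le
      rw [Nat.sub_eq_zero_of_le h.le, max_eq_left (by rw [habs]; linarith)]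
      norm_num
  rw [tsum_eq_sum (s := Finset.Icc (-(t : ℤ)) (t : ℤ)) ?vanish]
  case vanish =>
    intro n hn
    simp only [Finset.mem_Icc, not_and_or, not_le] at hn
    rw [key]
    have : t ≤ n.natAbs * p := by
      have : t ≤ n.natAbs := by omega
      calc t ≤ n.natAbs := this
        _ ≤ n.natAbs * p := Nat.le_mul_of_pos_right _ hp
    rw [Nat.sub_eq_zero_of_le this]
    norm_num
  rw [step1, step2]
  push_cast
  apply Finset.sum_congr rfl
  intro n _
  rw [key]
  ring
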